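/- Mass-regularised limit: let Λ be a finite set with distinguished point 0, let Δ_J be a symmetric operator on R^Λ annihilating constants with (σ, −Δ_J σ) ≥ 0, let Z_β = (2π/√β) Z, and let F : (Z_β)^Λ → R be bounded, invariant under adding constants in Z_β, with Σ_{σ ∈ Ω} e^{−(1/2)(σ,−Δ_J σ)} |F(σ)| < ∞ where Ω = {σ ∈ (Z_β)^Λ : σ_0 = 0}. Then for every m² > 0 the series Σ_{σ ∈ (Z_β)^Λ} e^{−(1/2)(σ, (−Δ_J + m²)σ)} F(σ) converges absolutely, and as m² ↓ 0 the ratio of this series to the corresponding one with F replaced by 1 converges to (Σ_{σ∈Ω} e^{−(1/2)(σ,−Δ_J σ)} F(σ)) / (Σ_{σ∈Ω} e^{−(1/2)(σ,−Δ_J σ)}). -/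

import Mathlib

open Filter Topology

noncomputable def th (a s : ℝ) : ℝ := ∑' t : ℤ, Real.exp (-(a * ((t : ℝ) + s)^2))

lemma summand_le {a : ℝ} (ha : 0 < a) (s t : ℝ) :
    Real.exp (-(a*(t+s)^2)) ≤ Real.exp (1 + 2*Real.sqrt a*|s|) * Real.exp (-(2*Real.sqrt a*|t|)) := by
  rw [← Real.exp_add]
  apply Real.exp_le_exp.2
  have h1 : |t| ≤ |t+s| + |s| := by
    calc |t| = |(t+s) + (-s)| := by ring_nf
    _ ≤ |t+s| + |(-s)| := abs_add_le _ _
    _ = |t+s| + |s| := by rw [abs_neg]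
  have h2 : 2*Real.sqrt a*|t+s| ≤ 1 + a*(t+s)^2 := by
    nlinarith [sq_nonneg (Real.sqrt a*|t+s| - 1), Real.sq_sqrt ha.le, sq_abs (t+s)]
  have h3 : (0:ℝ) ≤ 2*Real.sqrt a := by positivity
  nlinarith [mul_le_mul_of_nonneg_left h1 h3]

lemma summable_exp_neg_abs {ε : ℝ} (hε : 0 < ε) :
    Summable (fun t : ℤ => Real.exp (-(ε * |(t : ℝ)|))) := by
  have h : Summable (fun n : ℕ => Real.exp (-ε) ^ n) :=
    summable_geometric_of_lt_one (Real.exp_nonneg _)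
      (by rw [Real.exp_lt_one_iff]; linarith)
  apply Summable.of_nat_of_neg
  · refine h.congr fun n => ?_
    rw [← Real.exp_nat_mul]
    congr 1
    rw [Int.cast_natCast, abs_of_nonneg (by positivity : (0:ℝ) ≤ (n:ℝ))]
    ring
  · refine h.congr fun n => ?_
    rw [← Real.exp_nat_mul]
    congr 1
    push_cast
    rw [abs_neg, abs_of_nonneg (by positivity : (0:ℝ) ≤ (n:ℝ))]
    ring

lemma summable_th {a : ℝ} (ha : 0 < a) (s : ℝ) :
    Summable (fun t : ℤ => Real.exp (-(a * ((t : ℝ) + s)^2))) := by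
  have h2 : (0:ℝ) < 2 * Real.sqrt a := by positivity
  refine Summable.of_nonneg_of_le (fun t => Real.exp_nonneg _) (fun t => ?_)
    ((summable_exp_neg_abs h2).mul_left (Real.exp (1 + 2*Real.sqrt a*|s|)))
  exact summand_le ha s (t:ℝ)

lemma th_nonneg (a s : ℝ) : 0 ≤ th a s := tsum_nonneg fun _ => Real.exp_nonneg _

lemma one_le_th0 {a : ℝ} (ha : 0 < a) : 1 ≤ th a 0 := by
  have h := Summable.le_tsum (summable_th ha 0) 0 (fun j _ => Real.exp_nonneg _)
  calc (1:ℝ) = Real.exp (-(a * (((0:ℤ):ℝ) + 0)^2)) := by norm_num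
  _ ≤ th a 0 := h

lemma th_shift (a s : ℝ) (r : ℤ) : th a (s + r) = th a s := by
  unfold th
  rw [← (Equiv.addRight r).tsum_eq (fun t : ℤ => Real.exp (-(a * ((t:ℝ) + s)^2)))]
  apply tsum_congr
  intro t
  simp only [Equiv.coe_addRight]
  congr 1
  push_cast
  ring

lemma th_le {a : ℝ} (ha : 0 < a) (s : ℝ) : th a s ≤ 2 * th a 0 + 1 := by
  have hshift : th a s = th a (s - round s) := by
    have h := th_shift a (s - round s) (round s)
    rw [show s - (round s : ℝ) + (round s : ℤ) = s by push_cast; ring] at h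
    exact h
  rw [hshift]
  set s' := s - round s with hs'def
  have hs2 : |s'| ≤ 1/2 := abs_sub_round s
  have hf := summable_th ha s'
  have g1sum : Summable (fun t : ℤ => Real.exp (-(a*((t:ℝ)-1)^2))) :=
    (summable_th ha (-1)).congr (fun t => by congr 1)
  have g2sum : Summable (fun t : ℤ => Real.exp (-(a*((t:ℝ)+1)^2))) :=
    (summable_th ha 1).congr (fun t => by congr 1)
  have hsplit := hf.tsum_eq_add_tsum_ite (0:ℤ)
  have hf0 : Real.exp (-(a * (((0:ℤ):ℝ) + s')^2)) ≤ 1 := by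
    calc Real.exp (-(a * (((0:ℤ):ℝ) + s')^2)) ≤ Real.exp 0 :=
      Real.exp_le_exp.2 (by simp only [neg_nonpos]; positivity)
    _ = 1 := Real.exp_zero
  have hitesum : Summable (fun t : ℤ => if t = 0 then 0 else Real.exp (-(a*((t:ℝ)+s')^2))) := by
    refine Summable.of_nonneg_of_le (fun t => ?_) (fun t => ?_) hf
    · by_cases h : t = 0 <;> simp [h, Real.exp_nonneg]
    · by_cases h : t = 0 <;> simp [h, Real.exp_nonneg]
  have hrest : (∑' t : ℤ, if t = 0 then 0 else Real.exp (-(a*((t:ℝ)+s')^2)))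
      ≤ ∑' t : ℤ, (Real.exp (-(a*((t:ℝ)-1)^2)) + Real.exp (-(a*((t:ℝ)+1)^2))) := by
    refine Summable.tsum_le_tsum (fun t => ?_) hitesum (g1sum.add g2sum)
    by_cases h : t = 0
    · simp only [h, if_pos rfl]
      positivity
    · rw [if_neg h]
      have habs := abs_le.1 hs2
      rcases lt_or_gt_of_ne h with hlt | hgt
      · -- t ≤ -1
        have h1' : t ≤ -1 := by omega
        have h1 : (t:ℝ) ≤ -1 := by exact_mod_cast h1'
        have : Real.exp (-(a*((t:ℝ)+s')^2)) ≤ Real.exp (-(a*((t:ℝ)+1)^2)) := by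
          apply Real.exp_le_exp.2
          have : ((t:ℝ)+1)^2 ≤ ((t:ℝ)+s')^2 := by nlinarith
          nlinarith
        linarith [Real.exp_nonneg (-(a*((t:ℝ)-1)^2))]
      · -- t ≥ 1
        have h1' : (1:ℤ) ≤ t := by omega
        have h1 : (1:ℝ) ≤ (t:ℝ) := by exact_mod_cast h1'
        have : Real.exp (-(a*((t:ℝ)+s')^2)) ≤ Real.exp (-(a*((t:ℝ)-1)^2)) := by
          apply Real.exp_le_exp.2
          have : ((t:ℝ)-1)^2 ≤ ((t:ℝ)+s')^2 := by nlinarith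
          nlinarith
        linarith [Real.exp_nonneg (-(a*((t:ℝ)+1)^2))]
  have hg1 : (∑' t : ℤ, Real.exp (-(a*((t:ℝ)-1)^2))) = th a 0 := by
    have h := th_shift a 0 (-1)
    rw [← h]
    apply tsum_congr
    intro t
    congr 1
    push_cast
    ring
  have hg2 : (∑' t : ℤ, Real.exp (-(a*((t:ℝ)+1)^2))) = th a 0 := by
    have h := th_shift a 0 1
    rw [← h]
    apply tsum_congr
    intro t
    congr 1
    push_cast
    ring
  have hadd : (∑' t : ℤ, (Real.exp (-(a*((t:ℝ)-1)^2)) + Real.exp (-(a*((t:ℝ)+1)^2))))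
      = th a 0 + th a 0 := by
    rw [Summable.tsum_add g1sum g2sum, hg1, hg2]
  calc th a s' = Real.exp (-(a * (((0:ℤ):ℝ) + s')^2))
      + ∑' t : ℤ, (if t = 0 then 0 else Real.exp (-(a*((t:ℝ)+s')^2))) := hsplit
  _ ≤ 1 + (th a 0 + th a 0) := by
      have := hrest.trans_eq hadd
      linarith
  _ ≤ 2 * th a 0 + 1 := by linarith


lemma th_upper {a : ℝ} (ha : 0 < a) (ha1 : a ≤ 1) : th a 0 ≤ Real.exp 3 / Real.sqrt a := by
  have hsa : 0 < Real.sqrt a := Real.sqrt_pos.2 ha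
  set ε := 2 * Real.sqrt a with hεdef
  have hε : 0 < ε := by positivity
  have hε2 : ε ≤ 2 := by
    have h1 : Real.sqrt a ≤ 1 := by
      rw [show (1:ℝ) = Real.sqrt 1 by simp]
      exact Real.sqrt_le_sqrt ha1
    simp only [hεdef]; linarith
  set q := Real.exp (-ε) with hqdef
  have hq0 : 0 ≤ q := Real.exp_nonneg _
  have hq1 : q < 1 := by
    rw [hqdef, Real.exp_lt_one_iff]; linarith
  have hterm : ∀ t : ℤ, Real.exp (-(a * ((t:ℝ)+0)^2)) ≤ Real.exp 1 * Real.exp (-(ε * |(t:ℝ)|)) := by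
    intro t
    have h := summand_le ha 0 (t:ℝ)
    simpa using h
  have hZs : Summable (fun t : ℤ => Real.exp (-(ε * |(t:ℝ)|))) := summable_exp_neg_abs hε
  have h1 : th a 0 ≤ Real.exp 1 * ∑' t : ℤ, Real.exp (-(ε * |(t:ℝ)|)) := by
    rw [← tsum_mul_left]
    exact Summable.tsum_le_tsum hterm (summable_th ha 0) (hZs.mul_left _)
  have hgeom : Summable (fun n : ℕ => q ^ n) := summable_geometric_of_lt_one hq0 hq1
  have hnat : ∀ n : ℕ, Real.exp (-(ε * |((n:ℤ):ℝ)|)) = q ^ n := by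
    intro n
    rw [hqdef, ← Real.exp_nat_mul]
    congr 1
    rw [Int.cast_natCast, abs_of_nonneg (by positivity : (0:ℝ) ≤ (n:ℝ))]
    ring
  have hneg : ∀ n : ℕ, Real.exp (-(ε * |(((-((n:ℤ)+1)) : ℤ):ℝ)|)) = q ^ (n+1) := by
    intro n
    rw [hqdef, ← Real.exp_nat_mul]
    congr 1
    push_cast
    rw [abs_neg, abs_of_nonneg (by positivity : (0:ℝ) ≤ (n:ℝ)+1)]
    ring
  have hZval : (∑' t : ℤ, Real.exp (-(ε * |(t:ℝ)|))) ≤ 2 * (1-q)⁻¹ := by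
    have hs1 : Summable (fun n : ℕ => Real.exp (-(ε * |((n:ℤ):ℝ)|))) := hgeom.congr (fun n => (hnat n).symm)
    have hs2 : Summable (fun n : ℕ => Real.exp (-(ε * |(((-((n:ℤ)+1)) : ℤ):ℝ)|))) :=
      (hgeom.mul_left q).congr (fun n => by rw [hneg n]; ring)
    have heq := tsum_of_nat_of_neg_add_one (f := fun t : ℤ => Real.exp (-(ε * |(t:ℝ)|))) hs1 hs2
    rw [heq]
    have he1 : (∑' n : ℕ, Real.exp (-(ε * |((n:ℤ):ℝ)|))) = (1-q)⁻¹ := by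
      rw [tsum_congr hnat, tsum_geometric_of_lt_one hq0 hq1]
    have he2 : (∑' n : ℕ, Real.exp (-(ε * |(((-((n:ℤ)+1)) : ℤ):ℝ)|))) = q * (1-q)⁻¹ := by
      rw [tsum_congr hneg]
      have : ∀ n : ℕ, q ^ (n+1) = q * q ^ n := fun n => by ring
      rw [tsum_congr this, tsum_mul_left, tsum_geometric_of_lt_one hq0 hq1]
    rw [he1, he2]
    have hpos : 0 ≤ (1-q)⁻¹ := inv_nonneg.2 (by linarith)
    nlinarith
  have hden : ε * Real.exp (-(2:ℝ)) ≤ 1 - q := by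
    have h3 := Real.add_one_le_exp ε
    have h5 : Real.exp (-ε) * (ε + 1) ≤ Real.exp (-ε) * Real.exp ε := by
      apply mul_le_mul_of_nonneg_left h3 (Real.exp_nonneg _)
    rw [← Real.exp_add] at h5
    simp only [neg_add_cancel, Real.exp_zero] at h5
    have h6 : Real.exp (-(2:ℝ)) ≤ Real.exp (-ε) := Real.exp_le_exp.2 (by linarith)
    have h7 : Real.exp (-ε) * ε ≤ 1 - q := by rw [hqdef]; nlinarith [Real.exp_nonneg (-ε)]
    nlinarith [Real.exp_nonneg (-(2:ℝ))]
  have hinv : (1-q)⁻¹ ≤ (ε * Real.exp (-(2:ℝ)))⁻¹ := by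
    apply inv_anti₀ (by positivity) hden
  calc th a 0 ≤ Real.exp 1 * ∑' t : ℤ, Real.exp (-(ε * |(t:ℝ)|)) := h1
  _ ≤ Real.exp 1 * (2 * (1-q)⁻¹) := by
      apply mul_le_mul_of_nonneg_left hZval (Real.exp_nonneg _)
  _ ≤ Real.exp 1 * (2 * (ε * Real.exp (-(2:ℝ)))⁻¹) := by
      apply mul_le_mul_of_nonneg_left (by nlinarith) (Real.exp_nonneg _)
  _ = Real.exp 3 / Real.sqrt a := by
      rw [hεdef, Real.exp_neg]
      rw [show (3:ℝ) = 1 + 2 by norm_num, Real.exp_add]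
      field_simp

lemma th_atTop : Tendsto (fun a => th a 0) (𝓝[>](0:ℝ)) atTop := by
  rw [tendsto_atTop]
  intro b
  set K : ℕ := ⌈b * Real.exp 1⌉₊ with hK
  have hδ : (0:ℝ) < 1/((K:ℝ)+1)^2 := by positivity
  filter_upwards [Ioo_mem_nhdsGT_of_mem (Set.left_mem_Ico.2 hδ)] with a ha
  obtain ⟨ha0, haδ⟩ := ha
  have hsub : (∑ t ∈ Finset.Icc (0:ℤ) (K:ℤ), Real.exp (-(a * ((t:ℝ)+0)^2))) ≤ th a 0 :=
    Summable.sum_le_tsum _ (fun t _ => Real.exp_nonneg _) (summable_th ha0 0)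
  have hcard : (Finset.Icc (0:ℤ) (K:ℤ)).card = K + 1 := by
    rw [Int.card_Icc]
    simp
  have hlow : ∀ t ∈ Finset.Icc (0:ℤ) (K:ℤ), Real.exp (-(1:ℝ)) ≤ Real.exp (-(a * ((t:ℝ)+0)^2)) := by
    intro t ht
    rw [Finset.mem_Icc] at ht
    apply Real.exp_le_exp.2
    have h1 : (0:ℝ) ≤ (t:ℝ) := by exact_mod_cast ht.1
    have h2 : (t:ℝ) ≤ (K:ℝ) := by exact_mod_cast ht.2
    have h3 : ((t:ℝ)+0)^2 ≤ ((K:ℝ)+1)^2 := by nlinarith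
    have h4 : a * ((t:ℝ)+0)^2 ≤ 1 := by
      calc a * ((t:ℝ)+0)^2 ≤ (1/((K:ℝ)+1)^2) * ((K:ℝ)+1)^2 := by
            apply mul_le_mul haδ.le h3 (by positivity) hδ.le
      _ = 1 := by field_simp
    linarith
  have hsum2 := Finset.card_nsmul_le_sum (Finset.Icc (0:ℤ) (K:ℤ)) _ _ hlow
  rw [hcard, nsmul_eq_mul] at hsum2
  have hb : b ≤ ((K:ℕ):ℝ) * Real.exp (-1) + Real.exp (-1) := by
    have h1 : b * Real.exp 1 ≤ (K:ℝ) := Nat.le_ceil _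
    have h2 : (0:ℝ) < Real.exp 1 := Real.exp_pos 1
    rw [Real.exp_neg]
    have h3 : b = b * Real.exp 1 * (Real.exp 1)⁻¹ := by field_simp
    rw [h3]
    have h4 : (0:ℝ) ≤ (Real.exp 1)⁻¹ := by positivity
    nlinarith
  push_cast at hsum2
  linarith

lemma exp_diff_le {u v : ℝ} : |Real.exp (-u) - Real.exp (-v)| ≤ |u - v| * (Real.exp (-u) + Real.exp (-v)) := by
  wlog h : v ≤ u generalizing u v
  · have h2 := this (le_of_not_ge h)
    rw [abs_sub_comm, abs_sub_comm v u] at h2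
    linarith [h2]
  · have hle : Real.exp (-u) ≤ Real.exp (-v) := Real.exp_le_exp.2 (by linarith)
    rw [abs_of_nonpos (by linarith), abs_of_nonneg (by linarith), neg_sub]
    have h1 : Real.exp (-v) - Real.exp (-u) = Real.exp (-v) * (1 - Real.exp (-(u - v))) := by
      rw [mul_sub, mul_one, ← Real.exp_add]
      ring_nf
    have h2 : 1 - Real.exp (-(u-v)) ≤ u - v := by
      linarith [Real.add_one_le_exp (-(u-v))]
    have h3 : 0 ≤ 1 - Real.exp (-(u-v)) := by
      have : Real.exp (-(u-v)) ≤ Real.exp 0 := Real.exp_le_exp.2 (by linarith)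
      simp only [Real.exp_zero] at this
      linarith
    calc Real.exp (-v) - Real.exp (-u) = Real.exp (-v) * (1 - Real.exp (-(u - v))) := h1
    _ ≤ Real.exp (-v) * (u - v) := mul_le_mul_of_nonneg_left h2 (Real.exp_nonneg _)
    _ ≤ (u - v) * (Real.exp (-u) + Real.exp (-v)) := by nlinarith [Real.exp_nonneg (-u), Real.exp_nonneg (-v)]

lemma absorb {a s x : ℝ} (ha : 0 < a) :
    a*|s| *(2*|x| + |s|) * Real.exp (-(a*x^2)) ≤ (2*|s| *Real.sqrt a + a*s^2) * Real.exp (-(a/2*x^2)) := by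
  have hkey : Real.sqrt a * |x| ≤ Real.exp (a/2 * x^2) := by
    have h2 := Real.add_one_le_exp (a/2 * x^2)
    nlinarith [sq_nonneg (Real.sqrt a * |x| - 1), Real.sq_sqrt ha.le, sq_abs x]
  have hsq : Real.sqrt a * Real.sqrt a = a := Real.mul_self_sqrt ha.le
  have h1 : a*|x| *Real.exp (-(a*x^2)) ≤ Real.sqrt a * Real.exp (-(a/2*x^2)) := by
    have hstep : (Real.sqrt a * |x|) * Real.exp (-(a*x^2)) ≤ Real.exp (a/2*x^2) * Real.exp (-(a*x^2)) :=
      mul_le_mul_of_nonneg_right hkey (Real.exp_nonneg _)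
    have hexp : Real.exp (a/2*x^2) * Real.exp (-(a*x^2)) = Real.exp (-(a/2*x^2)) := by
      rw [← Real.exp_add]; ring_nf
    calc a*|x| *Real.exp (-(a*x^2)) = Real.sqrt a * ((Real.sqrt a * |x|) * Real.exp (-(a*x^2))) := by
          linear_combination (-(|x| * Real.exp (-(a*x^2)))) * hsq
    _ ≤ Real.sqrt a * (Real.exp (a/2*x^2) * Real.exp (-(a*x^2))) :=
          mul_le_mul_of_nonneg_left hstep (Real.sqrt_nonneg a)
    _ = Real.sqrt a * Real.exp (-(a/2*x^2)) := by rw [hexp]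
  have h2 : a*s^2*Real.exp (-(a*x^2)) ≤ a*s^2*Real.exp (-(a/2*x^2)) := by
    apply mul_le_mul_of_nonneg_left _ (by positivity : (0:ℝ) ≤ a*s^2)
    apply Real.exp_le_exp.2
    nlinarith [sq_nonneg x]
  have hrw : a*|s| *(2*|x| + |s|) * Real.exp (-(a*x^2))
      = 2*|s| *(a*|x| *Real.exp (-(a*x^2))) + (a*s^2)*Real.exp (-(a*x^2)) := by
    have h5 : |s| * |s| = s^2 := by rw [← sq_abs]; ring
    linear_combination (a * Real.exp (-(a*x^2))) * h5
  rw [hrw]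
  have h3 : 2*|s| *(a*|x| *Real.exp (-(a*x^2))) ≤ 2*|s| *(Real.sqrt a * Real.exp (-(a/2*x^2))) :=
    mul_le_mul_of_nonneg_left h1 (by positivity)
  calc 2*|s| *(a*|x| *Real.exp (-(a*x^2))) + (a*s^2)*Real.exp (-(a*x^2))
      ≤ 2*|s| *(Real.sqrt a * Real.exp (-(a/2*x^2))) + (a*s^2)*Real.exp (-(a/2*x^2)) := by
        linarith
  _ = (2*|s| *Real.sqrt a + a*s^2) * Real.exp (-(a/2*x^2)) := by ring

lemma th_diff {a : ℝ} (ha : 0 < a) (s : ℝ) :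
    |th a s - th a 0| ≤ (2*|s| *Real.sqrt a + a*s^2) * (4 * th (a/2) 0) := by
  have ha2 : 0 < a/2 := half_pos ha
  have hf := summable_th ha s
  have hg := summable_th ha 0
  have hfs2 := summable_th ha2 s
  have hg2 := summable_th ha2 0
  have hBnn : (0:ℝ) ≤ 2*|s| *Real.sqrt a + a*s^2 := by positivity
  have hterm : ∀ t : ℤ, |Real.exp (-(a*((t:ℝ)+s)^2)) - Real.exp (-(a*((t:ℝ)+0)^2))|
      ≤ (2*|s| *Real.sqrt a + a*s^2) * (Real.exp (-(a/2*((t:ℝ)+s)^2)) + Real.exp (-(a/2*((t:ℝ)+0)^2))) := by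
    intro t
    have h0 := exp_diff_le (u := a*((t:ℝ)+s)^2) (v := a*((t:ℝ)+0)^2)
    have habs1 : |a*((t:ℝ)+s)^2 - a*((t:ℝ)+0)^2| ≤ a*|s| *(2*|(t:ℝ)+s| + |s|) := by
      have h1 : a*((t:ℝ)+s)^2 - a*((t:ℝ)+0)^2 = a * (s * (2*((t:ℝ)+s) - s)) := by ring
      rw [h1, abs_mul, abs_mul, abs_of_pos ha]
      have h2 : |2*((t:ℝ)+s) - s| ≤ 2*|(t:ℝ)+s| + |s| := by
        calc |2*((t:ℝ)+s) - s| ≤ |2*((t:ℝ)+s)| + |s| := abs_sub _ _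
        _ = 2*|(t:ℝ)+s| + |s| := by rw [abs_mul]; norm_num
      calc a * (|s| * |2*((t:ℝ)+s) - s|) ≤ a * (|s| * (2*|(t:ℝ)+s| + |s|)) := by
            apply mul_le_mul_of_nonneg_left _ ha.le
            exact mul_le_mul_of_nonneg_left h2 (abs_nonneg s)
      _ = a*|s| *(2*|(t:ℝ)+s| + |s|) := by ring
    have habs2 : |a*((t:ℝ)+s)^2 - a*((t:ℝ)+0)^2| ≤ a*|s| *(2*|(t:ℝ)+0| + |s|) := by
      have h1 : a*((t:ℝ)+s)^2 - a*((t:ℝ)+0)^2 = a * (s * (2*((t:ℝ)+0) + s)) := by ring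
      rw [h1, abs_mul, abs_mul, abs_of_pos ha]
      have h2 : |2*((t:ℝ)+0) + s| ≤ 2*|(t:ℝ)+0| + |s| := by
        calc |2*((t:ℝ)+0) + s| ≤ |2*((t:ℝ)+0)| + |s| := abs_add_le _ _
        _ = 2*|(t:ℝ)+0| + |s| := by rw [abs_mul]; norm_num
      calc a * (|s| * |2*((t:ℝ)+0) + s|) ≤ a * (|s| * (2*|(t:ℝ)+0| + |s|)) := by
            apply mul_le_mul_of_nonneg_left _ ha.le
            exact mul_le_mul_of_nonneg_left h2 (abs_nonneg s)
      _ = a*|s| *(2*|(t:ℝ)+0| + |s|) := by ring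
    have hA := absorb (a := a) (s := s) (x := (t:ℝ)+s) ha
    have hB := absorb (a := a) (s := s) (x := (t:ℝ)+0) ha
    have hd1 : |a*((t:ℝ)+s)^2 - a*((t:ℝ)+0)^2| * Real.exp (-(a*((t:ℝ)+s)^2))
        ≤ (2*|s| *Real.sqrt a + a*s^2) * Real.exp (-(a/2*((t:ℝ)+s)^2)) := by
      calc |a*((t:ℝ)+s)^2 - a*((t:ℝ)+0)^2| * Real.exp (-(a*((t:ℝ)+s)^2))
          ≤ (a*|s| *(2*|(t:ℝ)+s| + |s|)) * Real.exp (-(a*((t:ℝ)+s)^2)) :=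
            mul_le_mul_of_nonneg_right habs1 (Real.exp_nonneg _)
      _ ≤ _ := hA
    have hd2 : |a*((t:ℝ)+s)^2 - a*((t:ℝ)+0)^2| * Real.exp (-(a*((t:ℝ)+0)^2))
        ≤ (2*|s| *Real.sqrt a + a*s^2) * Real.exp (-(a/2*((t:ℝ)+0)^2)) := by
      calc |a*((t:ℝ)+s)^2 - a*((t:ℝ)+0)^2| * Real.exp (-(a*((t:ℝ)+0)^2))
          ≤ (a*|s| *(2*|(t:ℝ)+0| + |s|)) * Real.exp (-(a*((t:ℝ)+0)^2)) :=
            mul_le_mul_of_nonneg_right habs2 (Real.exp_nonneg _)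
      _ ≤ _ := hB
    calc |Real.exp (-(a*((t:ℝ)+s)^2)) - Real.exp (-(a*((t:ℝ)+0)^2))|
        ≤ |a*((t:ℝ)+s)^2 - a*((t:ℝ)+0)^2| * (Real.exp (-(a*((t:ℝ)+s)^2)) + Real.exp (-(a*((t:ℝ)+0)^2))) := h0
    _ = |a*((t:ℝ)+s)^2 - a*((t:ℝ)+0)^2| * Real.exp (-(a*((t:ℝ)+s)^2))
        + |a*((t:ℝ)+s)^2 - a*((t:ℝ)+0)^2| * Real.exp (-(a*((t:ℝ)+0)^2)) := by ring
    _ ≤ (2*|s| *Real.sqrt a + a*s^2) * Real.exp (-(a/2*((t:ℝ)+s)^2))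
        + (2*|s| *Real.sqrt a + a*s^2) * Real.exp (-(a/2*((t:ℝ)+0)^2)) := add_le_add hd1 hd2
    _ = (2*|s| *Real.sqrt a + a*s^2) * (Real.exp (-(a/2*((t:ℝ)+s)^2)) + Real.exp (-(a/2*((t:ℝ)+0)^2))) := by ring
  have hdiffsum : Summable (fun t : ℤ => Real.exp (-(a*((t:ℝ)+s)^2)) - Real.exp (-(a*((t:ℝ)+0)^2))) := hf.sub hg
  have hsub : th a s - th a 0 = ∑' t : ℤ, (Real.exp (-(a*((t:ℝ)+s)^2)) - Real.exp (-(a*((t:ℝ)+0)^2))) :=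
    (Summable.tsum_sub hf hg).symm
  have habs : Summable (fun t : ℤ => |Real.exp (-(a*((t:ℝ)+s)^2)) - Real.exp (-(a*((t:ℝ)+0)^2))|) := hdiffsum.abs
  have hboundsum : Summable (fun t : ℤ =>
      (2*|s| *Real.sqrt a + a*s^2) * (Real.exp (-(a/2*((t:ℝ)+s)^2)) + Real.exp (-(a/2*((t:ℝ)+0)^2)))) :=
    (hfs2.add hg2).mul_left _
  have hnorm : |∑' t : ℤ, (Real.exp (-(a*((t:ℝ)+s)^2)) - Real.exp (-(a*((t:ℝ)+0)^2)))|
      ≤ ∑' t : ℤ, |Real.exp (-(a*((t:ℝ)+s)^2)) - Real.exp (-(a*((t:ℝ)+0)^2))| := by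
    have h := norm_tsum_le_tsum_norm (f := fun t : ℤ => Real.exp (-(a*((t:ℝ)+s)^2)) - Real.exp (-(a*((t:ℝ)+0)^2)))
      (by simpa [Real.norm_eq_abs] using habs)
    simpa [Real.norm_eq_abs] using h
  rw [hsub]
  calc |∑' t : ℤ, (Real.exp (-(a*((t:ℝ)+s)^2)) - Real.exp (-(a*((t:ℝ)+0)^2)))|
      ≤ ∑' t : ℤ, |Real.exp (-(a*((t:ℝ)+s)^2)) - Real.exp (-(a*((t:ℝ)+0)^2))| := hnorm
  _ ≤ ∑' t : ℤ, (2*|s| *Real.sqrt a + a*s^2) * (Real.exp (-(a/2*((t:ℝ)+s)^2)) + Real.exp (-(a/2*((t:ℝ)+0)^2))) :=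
      Summable.tsum_le_tsum hterm habs hboundsum
  _ = (2*|s| *Real.sqrt a + a*s^2) * (th (a/2) s + th (a/2) 0) := by
      rw [tsum_mul_left, Summable.tsum_add hfs2 hg2]
      rfl
  _ ≤ (2*|s| *Real.sqrt a + a*s^2) * (4 * th (a/2) 0) := by
      apply mul_le_mul_of_nonneg_left _ hBnn
      have h1 := th_le ha2 s
      have h2 := one_le_th0 ha2
      linarith

lemma th_diff_bound {a : ℝ} (s : ℝ) (ha : 0 < a) (ha1 : a ≤ 1) :
    |th a s - th a 0| ≤ 4 * Real.sqrt 2 * Real.exp 3 * (2*|s| + s^2) := by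
  have ha2 : 0 < a/2 := half_pos ha
  have hu : 0 < Real.sqrt a := Real.sqrt_pos.2 ha
  have hu1 : Real.sqrt a ≤ 1 := by
    rw [show (1:ℝ) = Real.sqrt 1 by simp]
    exact Real.sqrt_le_sqrt ha1
  have hsq : Real.sqrt a * Real.sqrt a = a := Real.mul_self_sqrt ha.le
  have h2 : Real.sqrt (a/2) = Real.sqrt a / Real.sqrt 2 := Real.sqrt_div ha.le 2
  have hs2 : (0:ℝ) < Real.sqrt 2 := by positivity
  calc |th a s - th a 0| ≤ (2*|s| *Real.sqrt a + a*s^2) * (4 * th (a/2) 0) := th_diff ha s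
  _ ≤ (2*|s| *Real.sqrt a + a*s^2) * (4 * (Real.exp 3 / Real.sqrt (a/2))) := by
      apply mul_le_mul_of_nonneg_left _ (by positivity)
      apply mul_le_mul_of_nonneg_left (th_upper ha2 (by linarith)) (by norm_num)
  _ ≤ 4 * Real.sqrt 2 * Real.exp 3 * (2*|s| + s^2) := by
      rw [h2, div_div_eq_mul_div]
      have hstep : (2* |s| * Real.sqrt a + a*s^2) * (4 * (Real.exp 3 * Real.sqrt 2 / Real.sqrt a))
          = 4 * Real.sqrt 2 * Real.exp 3 * (2* |s| + Real.sqrt a * s^2) := by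
        field_simp
        linear_combination (-(s^2)) * hsq
      rw [hstep]
      have h9 : (0:ℝ) ≤ 4*Real.sqrt 2*Real.exp 3 := by positivity
      have h10 := mul_nonneg (mul_nonneg h9 (sq_nonneg s)) (by linarith : (0:ℝ) ≤ 1 - Real.sqrt a)
      nlinarith [h10]

lemma th_ratio (s : ℝ) : Tendsto (fun a => th a s / th a 0) (𝓝[>](0:ℝ)) (𝓝 1) := by
  have key : Tendsto (fun a => th a s / th a 0 - 1) (𝓝[>](0:ℝ)) (𝓝 0) := by
    apply squeeze_zero_norm' (a := fun a => (4 * Real.sqrt 2 * Real.exp 3 * (2*|s| + s^2)) / th a 0)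
    · filter_upwards [Ioo_mem_nhdsGT_of_mem (Set.left_mem_Ico.2 one_pos)] with a ha
      have hthpos : (0:ℝ) < th a 0 := lt_of_lt_of_le one_pos (one_le_th0 ha.1)
      have heq : th a s / th a 0 - 1 = (th a s - th a 0) / th a 0 := by field_simp
      rw [Real.norm_eq_abs, heq, abs_div, abs_of_pos hthpos]
      exact (div_le_div_iff_of_pos_right hthpos).2 (th_diff_bound s ha.1 ha.2.le)
    · exact Tendsto.div_atTop tendsto_const_nhds th_atTop
  have h2 := key.add (tendsto_const_nhds (x := (1:ℝ)))
  simp only [sub_add_cancel, zero_add] at h2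
  exact h2

/-- The field `σ ∈ Z_β^Λ = ((2π/√β)ℤ)^Λ` associated to an integer-valued configuration. -/
noncomputable def dgField {Λ : Type*} (β : ℝ) (n : Λ → ℤ) : Λ → ℝ :=
  fun x => 2 * Real.pi / Real.sqrt β * (n x : ℝ)

/-- The quadratic form `(σ, −Δ_J σ)`. -/
noncomputable def quadForm {Λ : Type*} [Fintype Λ] (ΔJ : Matrix Λ Λ ℝ) (σ : Λ → ℝ) : ℝ :=
  dotProduct σ (Matrix.mulVec (-ΔJ) σ)

def zeroEquiv (Λ : Type*) [DecidableEq Λ] (o : Λ) : (Λ → ℤ) ≃ ({n : Λ → ℤ // n o = 0} × ℤ) where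
  toFun n := (⟨fun x => n x - n o, by simp⟩, n o)
  invFun p := fun x => p.1.1 x + p.2
  left_inv n := by funext x; simp
  right_inv p := by
    obtain ⟨⟨n, hn⟩, t⟩ := p
    simp only [Prod.mk.injEq, Subtype.mk.injEq]
    constructor
    · funext x; rw [hn]; ring
    · rw [hn]; ring

lemma zeroEquiv_symm_apply {Λ : Type*} [DecidableEq Λ] (o : Λ) (p : {n : Λ → ℤ // n o = 0} × ℤ) :
    (zeroEquiv Λ o).symm p = fun x => p.1.1 x + p.2 := rfl

lemma quad_shift {Λ : Type*} [Fintype Λ] (ΔJ : Matrix Λ Λ ℝ) (hsym : ΔJ.IsSymm)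
    (hconst : ∀ t : ℝ, Matrix.mulVec ΔJ (fun _ => t) = 0) (σ : Λ → ℝ) (r : ℝ) :
    quadForm ΔJ (fun x => σ x + r) = quadForm ΔJ σ := by
  have hzero : Matrix.mulVec (-ΔJ) (fun _ : Λ => r) = 0 := by
    rw [Matrix.neg_mulVec, hconst r, neg_zero]
  have hfun : (fun x => σ x + r) = σ + (fun _ : Λ => r) := rfl
  unfold quadForm
  rw [hfun, Matrix.mulVec_add, hzero, add_zero, add_dotProduct]
  have hz : dotProduct (fun _ : Λ => r) (Matrix.mulVec (-ΔJ) σ) = 0 := by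
    rw [Matrix.dotProduct_mulVec]
    have h2 : Matrix.transpose (-ΔJ) = -ΔJ := by rw [Matrix.transpose_neg, hsym.eq]
    have h1 : Matrix.vecMul (fun _ : Λ => r) (-ΔJ) = 0 := by
      rw [← Matrix.mulVec_transpose, h2, Matrix.neg_mulVec, hconst, neg_zero]
    rw [h1, zero_dotProduct]
  rw [hz, add_zero]

lemma dot_shift {Λ : Type*} [Fintype Λ] (σ : Λ → ℝ) (r : ℝ) :
    dotProduct (fun x => σ x + r) (fun x => σ x + r)
      = dotProduct σ σ + 2*r*(∑ x, σ x) + r^2 * (Fintype.card Λ : ℝ) := by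
  unfold dotProduct
  have h : ∀ x : Λ, (σ x + r) * (σ x + r) = σ x * σ x + (2*r) * σ x + r^2 := fun x => by ring
  simp_rw [h]
  rw [Finset.sum_add_distrib, Finset.sum_add_distrib, ← Finset.mul_sum, Finset.sum_const,
    nsmul_eq_mul, Finset.card_univ]
  ring

lemma exp_decomp (m c N Q R S t : ℝ) (hc : c ≠ 0) (hN : N ≠ 0) :
    Real.exp (-(1/2) * (Q + m * (R + 2*(c*t)*S + (c*t)^2*N)))
    = Real.exp (-(1/2) * Q) * Real.exp (m/2 * (S^2/N - R))
      * Real.exp (-(m * (c^2*N)/2 * (t + S/(c*N))^2)) := by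
  rw [← Real.exp_add, ← Real.exp_add]
  congr 1
  field_simp
  ring

lemma tendsto_ratio_tsum {ι : Type*} (g gabs : ι → ℝ) (hgabs : ∀ i, |g i| ≤ gabs i)
    (hsum : Summable gabs) (P : ℝ → ι → ℝ) (s : ι → ℝ) (k : ℝ) (hk : 0 < k)
    (hP1 : ∀ m i, 0 < m → P m i ≤ 1) (hP0 : ∀ m i, 0 < P m i)
    (hPt : ∀ i, Tendsto (fun m => P m i) (𝓝[>](0:ℝ)) (𝓝 1)) :
    Tendsto (fun m => ∑' i, g i * (P m i * (th (m*k/2) (s i) / th (m*k/2) 0)))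
      (𝓝[>](0:ℝ)) (𝓝 (∑' i, g i)) := by
  have haT : Tendsto (fun m : ℝ => m*k/2) (𝓝[>](0:ℝ)) (𝓝[>](0:ℝ)) := by
    apply tendsto_nhdsWithin_of_tendsto_nhds_of_eventually_within
    · have h : Tendsto (fun m : ℝ => m*k/2) (𝓝 0) (𝓝 (0*k/2)) := ((continuous_id.mul (continuous_const (y := k))).div_const (2:ℝ)).tendsto (0:ℝ)
      simp only [id_eq, zero_mul, zero_div] at h
      exact h.mono_left nhdsWithin_le_nhds
    · filter_upwards [self_mem_nhdsWithin] with m hm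
      have : (0:ℝ) < m := hm
      exact Set.mem_Ioi.2 (by positivity)
  apply tendsto_tsum_of_dominated_convergence (bound := fun i => 3 * gabs i) (hsum.mul_left 3)
  · intro i
    have h1 := hPt i
    have h2 := (th_ratio (s i)).comp haT
    have h3 : Tendsto (fun m => g i * (P m i * (th (m*k/2) (s i) / th (m*k/2) 0)))
        (𝓝[>](0:ℝ)) (𝓝 (g i * (1 * 1))) := tendsto_const_nhds.mul (h1.mul h2)
    simpa using h3
  · filter_upwards [self_mem_nhdsWithin] with m hm
    intro i
    have hm' : (0:ℝ) < m := hm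
    have ha : 0 < m*k/2 := by positivity
    have hth1 : (1:ℝ) ≤ th (m*k/2) 0 := one_le_th0 ha
    have hthpos : (0:ℝ) < th (m*k/2) 0 := by linarith
    have h1 : 0 ≤ th (m*k/2) (s i) / th (m*k/2) 0 := div_nonneg (th_nonneg _ _) (th_nonneg _ _)
    have h3 : th (m*k/2) (s i) / th (m*k/2) 0 ≤ 3 := by
      rw [div_le_iff₀ hthpos]
      have h4 := th_le ha (s i)
      nlinarith
    have hgabsnn : 0 ≤ gabs i := le_trans (abs_nonneg _) (hgabs i)
    rw [Real.norm_eq_abs, abs_mul]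
    calc |g i| * |P m i * (th (m*k/2) (s i) / th (m*k/2) 0)|
        ≤ gabs i * 3 := by
          apply mul_le_mul (hgabs i) ?_ (abs_nonneg _) hgabsnn
          rw [abs_mul, abs_of_pos (hP0 m i), abs_of_nonneg h1]
          calc P m i * (th (m*k/2) (s i) / th (m*k/2) 0) ≤ 1 * 3 :=
            mul_le_mul (hP1 m i hm') h3 h1 zero_le_one
          _ = 3 := one_mul 3
    _ = 3 * gabs i := mul_comm _ _

lemma key {Λ : Type*} [Fintype Λ] [DecidableEq Λ] (o : Λ)
    (ΔJ : Matrix Λ Λ ℝ) (hsym : ΔJ.IsSymm)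
    (hconst : ∀ t : ℝ, Matrix.mulVec ΔJ (fun _ => t) = 0)
    (β : ℝ) (hβ : 0 < β)
    (F : (Λ → ℝ) → ℝ)
    (hinv : ∀ (σ : Λ → ℝ) (t : ℤ),
      F (fun x => σ x + 2 * Real.pi / Real.sqrt β * (t : ℝ)) = F σ)
    (hsum : Summable (fun n : {n : Λ → ℤ // n o = 0} =>
      Real.exp (-(1 / 2) * quadForm ΔJ (dgField β n.1)) * |F (dgField β n.1)|)) :
    (∀ m : ℝ, 0 < m → Summable (fun n : Λ → ℤ =>
        Real.exp (-(1 / 2) * (quadForm ΔJ (dgField β n) +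
          m * dotProduct (dgField β n) (dgField β n))) * |F (dgField β n)|)) ∧
    Filter.Tendsto (fun m : ℝ =>
        (∑' n : Λ → ℤ, Real.exp (-(1 / 2) * (quadForm ΔJ (dgField β n) +
            m * dotProduct (dgField β n) (dgField β n))) * F (dgField β n)) /
          th (m * ((2 * Real.pi / Real.sqrt β)^2 * (Fintype.card Λ : ℝ)) / 2) 0)
      (𝓝[>] (0:ℝ))
      (𝓝 (∑' n : {n : Λ → ℤ // n o = 0},
            Real.exp (-(1 / 2) * quadForm ΔJ (dgField β n.1)) * F (dgField β n.1))) := by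
  classical
  have hπ := Real.pi_pos
  have hsqβ : 0 < Real.sqrt β := Real.sqrt_pos.2 hβ
  have hc : 0 < 2 * Real.pi / Real.sqrt β := by positivity
  set c : ℝ := 2 * Real.pi / Real.sqrt β with hcdef
  have hcard : 0 < Fintype.card Λ := Fintype.card_pos_iff.2 ⟨o⟩
  have hN : (0:ℝ) < (Fintype.card Λ : ℝ) := by exact_mod_cast hcard
  set N : ℝ := (Fintype.card Λ : ℝ) with hNdef
  set e := zeroEquiv Λ o with hedef
  have hfield : ∀ p : {n : Λ → ℤ // n o = 0} × ℤ,
      dgField β (e.symm p) = fun x => dgField β p.1.1 x + c * (p.2 : ℝ) := by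
    intro p
    funext x
    rw [hedef, zeroEquiv_symm_apply]
    unfold dgField
    push_cast
    ring
  have ho : ∀ n' : {n : Λ → ℤ // n o = 0}, dgField β n'.1 o = 0 := by
    intro n'
    unfold dgField
    rw [n'.2]
    simp
  have hQ : ∀ p, quadForm ΔJ (dgField β (e.symm p)) = quadForm ΔJ (dgField β p.1.1) := by
    intro p
    rw [hfield p]
    exact quad_shift ΔJ hsym hconst _ _
  have hFeq : ∀ p, F (dgField β (e.symm p)) = F (dgField β p.1.1) := by
    intro p
    rw [hfield p]
    exact hinv _ p.2
  have hdot : ∀ p, dotProduct (dgField β (e.symm p)) (dgField β (e.symm p))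
      = dotProduct (dgField β p.1.1) (dgField β p.1.1)
        + 2*(c*(p.2:ℝ))*(∑ x, dgField β p.1.1 x) + (c*(p.2:ℝ))^2 * N := by
    intro p
    rw [hfield p]
    exact dot_shift _ _
  have hDge : ∀ p : {n : Λ → ℤ // n o = 0} × ℤ,
      (c * (p.2:ℝ))^2 ≤ dotProduct (dgField β (e.symm p)) (dgField β (e.symm p)) := by
    intro p
    rw [hfield p]
    have h2 : (dgField β p.1.1 o + c*(p.2:ℝ)) * (dgField β p.1.1 o + c*(p.2:ℝ))
        ≤ ∑ x, (dgField β p.1.1 x + c*(p.2:ℝ)) * (dgField β p.1.1 x + c*(p.2:ℝ)) :=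
      Finset.single_le_sum (f := fun x => (dgField β p.1.1 x + c*(p.2:ℝ)) * (dgField β p.1.1 x + c*(p.2:ℝ)))
        (fun x _ => mul_self_nonneg _) (Finset.mem_univ o)
    rw [ho p.1] at h2
    show (c*(p.2:ℝ))^2 ≤ ∑ x, (dgField β p.1.1 x + c*(p.2:ℝ)) * (dgField β p.1.1 x + c*(p.2:ℝ))
    nlinarith [h2]
  -- summability over the product
  have hsummable : ∀ m : ℝ, 0 < m → Summable ((fun n : Λ → ℤ =>
      Real.exp (-(1 / 2) * (quadForm ΔJ (dgField β n) +
        m * dotProduct (dgField β n) (dgField β n))) * |F (dgField β n)|) ∘ e.symm) := by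
    intro m hm
    have hbpos : 0 < m * c^2 / 2 := by positivity
    have hb : Summable (fun t : ℤ => Real.exp (-(m * c^2/2 * ((t:ℝ))^2))) := by
      refine (summable_th hbpos 0).congr fun t => ?_
      norm_num
    have hprod := hsum.mul_of_nonneg hb
      (fun n' => mul_nonneg (Real.exp_nonneg _) (abs_nonneg _)) (fun t => Real.exp_nonneg _)
    refine Summable.of_nonneg_of_le
      (fun p => mul_nonneg (Real.exp_nonneg _) (abs_nonneg _)) (fun p => ?_) hprod
    simp only [Function.comp_apply]
    rw [hQ p, hFeq p]
    have hexp : Real.exp (-(1/2) * (quadForm ΔJ (dgField β p.1.1)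
          + m * dotProduct (dgField β (e.symm p)) (dgField β (e.symm p))))
        ≤ Real.exp (-(1/2) * quadForm ΔJ (dgField β p.1.1)) * Real.exp (-(m * c^2/2 * ((p.2:ℝ))^2)) := by
      rw [← Real.exp_add]
      apply Real.exp_le_exp.2
      nlinarith [mul_le_mul_of_nonneg_left (hDge p) hm.le]
    calc Real.exp (-(1/2) * (quadForm ΔJ (dgField β p.1.1)
          + m * dotProduct (dgField β (e.symm p)) (dgField β (e.symm p)))) * |F (dgField β p.1.1)|
        ≤ (Real.exp (-(1/2) * quadForm ΔJ (dgField β p.1.1)) * Real.exp (-(m * c^2/2 * ((p.2:ℝ))^2)))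
            * |F (dgField β p.1.1)| := mul_le_mul_of_nonneg_right hexp (abs_nonneg _)
    _ = (Real.exp (-(1/2) * quadForm ΔJ (dgField β p.1.1)) * |F (dgField β p.1.1)|)
            * Real.exp (-(m * c^2/2 * ((p.2:ℝ))^2)) := by ring
  constructor
  · intro m hm
    have h := hsummable m hm
    rwa [Equiv.summable_iff e.symm] at h
  -- the limit
  · have hmain := tendsto_ratio_tsum
      (fun n' : {n : Λ → ℤ // n o = 0} =>
        Real.exp (-(1 / 2) * quadForm ΔJ (dgField β n'.1)) * F (dgField β n'.1))
      (fun n' => Real.exp (-(1 / 2) * quadForm ΔJ (dgField β n'.1)) * |F (dgField β n'.1)|)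
      (fun n' => by rw [abs_mul, abs_of_pos (Real.exp_pos _)])
      hsum
      (fun m n' => Real.exp (m/2 * ((∑ x, dgField β n'.1 x)^2/N
        - dotProduct (dgField β n'.1) (dgField β n'.1))))
      (fun n' => (∑ x, dgField β n'.1 x) / (c*N))
      (c^2*N) (by positivity)
      ?_ (fun m n' => Real.exp_pos _) ?_
    · refine Filter.Tendsto.congr' ?_ hmain
      filter_upwards [self_mem_nhdsWithin] with m hm
      have hm' : (0:ℝ) < m := hm
      -- summability of the (non-absolute) function on the product
      have habs : Summable (fun p : {n : Λ → ℤ // n o = 0} × ℤ =>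
          |Real.exp (-(1 / 2) * (quadForm ΔJ (dgField β (e.symm p)) +
            m * dotProduct (dgField β (e.symm p)) (dgField β (e.symm p))))
            * F (dgField β (e.symm p))|) := by
        refine (hsummable m hm').congr fun p => ?_
        simp only [Function.comp_apply]
        rw [abs_mul, abs_of_pos (Real.exp_pos _)]
      have hS : Summable (fun p : {n : Λ → ℤ // n o = 0} × ℤ =>
          Real.exp (-(1 / 2) * (quadForm ΔJ (dgField β (e.symm p)) +
            m * dotProduct (dgField β (e.symm p)) (dgField β (e.symm p))))
            * F (dgField β (e.symm p))) := habs.of_abs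
      -- termwise rewriting
      have hterm : ∀ p : {n : Λ → ℤ // n o = 0} × ℤ,
          Real.exp (-(1 / 2) * (quadForm ΔJ (dgField β (e.symm p)) +
            m * dotProduct (dgField β (e.symm p)) (dgField β (e.symm p))))
            * F (dgField β (e.symm p))
          = ((Real.exp (-(1 / 2) * quadForm ΔJ (dgField β p.1.1)) * F (dgField β p.1.1))
              * Real.exp (m/2 * ((∑ x, dgField β p.1.1 x)^2/N
                - dotProduct (dgField β p.1.1) (dgField β p.1.1))))
            * Real.exp (-(m * (c^2*N)/2 * ((p.2:ℝ) + (∑ x, dgField β p.1.1 x)/(c*N))^2)) := by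
        intro p
        rw [hQ p, hFeq p, hdot p,
          exp_decomp m c N (quadForm ΔJ (dgField β p.1.1))
            (dotProduct (dgField β p.1.1) (dgField β p.1.1))
            (∑ x, dgField β p.1.1 x) (p.2:ℝ) hc.ne' hN.ne']
        ring
      -- chain of equalities
      have hre : (∑' n : Λ → ℤ, Real.exp (-(1 / 2) * (quadForm ΔJ (dgField β n) +
            m * dotProduct (dgField β n) (dgField β n))) * F (dgField β n))
          = ∑' p : {n : Λ → ℤ // n o = 0} × ℤ,
            Real.exp (-(1 / 2) * (quadForm ΔJ (dgField β (e.symm p)) +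
              m * dotProduct (dgField β (e.symm p)) (dgField β (e.symm p))))
              * F (dgField β (e.symm p)) :=
        (Equiv.tsum_eq e.symm _).symm
      have hprod2 : (∑' p : {n : Λ → ℤ // n o = 0} × ℤ,
            Real.exp (-(1 / 2) * (quadForm ΔJ (dgField β (e.symm p)) +
              m * dotProduct (dgField β (e.symm p)) (dgField β (e.symm p))))
              * F (dgField β (e.symm p)))
          = ∑' (b : {n : Λ → ℤ // n o = 0}) (t : ℤ),
            Real.exp (-(1 / 2) * (quadForm ΔJ (dgField β (e.symm (b, t))) +
              m * dotProduct (dgField β (e.symm (b, t))) (dgField β (e.symm (b, t)))))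
              * F (dgField β (e.symm (b, t))) :=
        Summable.tsum_prod' hS (fun b => hS.prod_factor b)
      have hinner : ∀ b : {n : Λ → ℤ // n o = 0},
          (∑' t : ℤ, Real.exp (-(1 / 2) * (quadForm ΔJ (dgField β (e.symm (b, t))) +
              m * dotProduct (dgField β (e.symm (b, t))) (dgField β (e.symm (b, t)))))
              * F (dgField β (e.symm (b, t))))
          = ((Real.exp (-(1 / 2) * quadForm ΔJ (dgField β b.1)) * F (dgField β b.1))
              * Real.exp (m/2 * ((∑ x, dgField β b.1 x)^2/N
                - dotProduct (dgField β b.1) (dgField β b.1))))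
            * th (m * (c^2*N) / 2) ((∑ x, dgField β b.1 x)/(c*N)) := by
        intro b
        rw [tsum_congr (fun t => hterm (b, t))]
        dsimp only
        rw [tsum_mul_left]
        rfl
      rw [hre, hprod2, ← tsum_div_const]
      apply tsum_congr
      intro b
      rw [hinner b]
      ring
    · intro m n' hm
      rw [Real.exp_le_one_iff]
      have hCS : (∑ x, dgField β n'.1 x)^2
          ≤ N * dotProduct (dgField β n'.1) (dgField β n'.1) := by
        have h := sq_sum_le_card_mul_sum_sq (s := Finset.univ) (f := fun x => dgField β n'.1 x)
        have hRR : dotProduct (dgField β n'.1) (dgField β n'.1)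
            = ∑ x, (dgField β n'.1 x)^2 := by
          unfold dotProduct
          apply Finset.sum_congr rfl
          intro x _
          ring
        rw [hRR]
        calc (∑ x, dgField β n'.1 x)^2 ≤ (Finset.univ.card : ℝ) * ∑ x, (dgField β n'.1 x)^2 := by
              exact_mod_cast h
        _ = N * ∑ x, (dgField β n'.1 x)^2 := by rw [Finset.card_univ]
      have hdivle : (∑ x, dgField β n'.1 x)^2/N
          ≤ dotProduct (dgField β n'.1) (dgField β n'.1) := by
        rw [div_le_iff₀ hN]
        nlinarith [hCS]
      nlinarith [hm]
    · intro n'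
      have hcont : Continuous (fun m : ℝ => Real.exp (m/2 * ((∑ x, dgField β n'.1 x)^2/N
          - dotProduct (dgField β n'.1) (dgField β n'.1)))) := by
        apply Real.continuous_exp.comp
        continuity
      have h := hcont.tendsto 0
      simp only [zero_div, zero_mul, Real.exp_zero] at h
      exact h.mono_left nhdsWithin_le_nhds

theorem stmt17 {Λ : Type*} [Fintype Λ] [DecidableEq Λ] (o : Λ)
    (ΔJ : Matrix Λ Λ ℝ) (hsym : ΔJ.IsSymm)
    (hconst : ∀ t : ℝ, Matrix.mulVec ΔJ (fun _ => t) = 0)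
    (hpos : ∀ σ : Λ → ℝ, 0 ≤ quadForm ΔJ σ)
    (β : ℝ) (hβ : 0 < β)
    (F : (Λ → ℝ) → ℝ) (M : ℝ) (hbd : ∀ σ, |F σ| ≤ M)
    (hinv : ∀ (σ : Λ → ℝ) (t : ℤ),
      F (fun x => σ x + 2 * Real.pi / Real.sqrt β * (t : ℝ)) = F σ)
    (hsum : Summable (fun n : {n : Λ → ℤ // n o = 0} =>
      Real.exp (-(1 / 2) * quadForm ΔJ (dgField β n.1)) * |F (dgField β n.1)|))
    (hZ : Summable (fun n : {n : Λ → ℤ // n o = 0} =>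
      Real.exp (-(1 / 2) * quadForm ΔJ (dgField β n.1)))) :
    (∀ m : ℝ, 0 < m → Summable (fun n : Λ → ℤ =>
        Real.exp (-(1 / 2) * (quadForm ΔJ (dgField β n) +
          m * dotProduct (dgField β n) (dgField β n))) * |F (dgField β n)|)) ∧
    Filter.Tendsto
      (fun m : ℝ =>
        (∑' n : Λ → ℤ, Real.exp (-(1 / 2) * (quadForm ΔJ (dgField β n) +
            m * dotProduct (dgField β n) (dgField β n))) * F (dgField β n)) /
        (∑' n : Λ → ℤ, Real.exp (-(1 / 2) * (quadForm ΔJ (dgField β n) +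
            m * dotProduct (dgField β n) (dgField β n)))))
      (nhdsWithin 0 (Set.Ioi 0))
      (nhds
        ((∑' n : {n : Λ → ℤ // n o = 0},
            Real.exp (-(1 / 2) * quadForm ΔJ (dgField β n.1)) * F (dgField β n.1)) /
         (∑' n : {n : Λ → ℤ // n o = 0},
            Real.exp (-(1 / 2) * quadForm ΔJ (dgField β n.1))))) := by
  obtain ⟨part1, hF⟩ := key o ΔJ hsym hconst β hβ F hinv hsum
  have hsum1 : Summable (fun n : {n : Λ → ℤ // n o = 0} =>
      Real.exp (-(1 / 2) * quadForm ΔJ (dgField β n.1)) * |(1:ℝ)|) := by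
    simpa using hZ
  obtain ⟨-, h1⟩ := key o ΔJ hsym hconst β hβ (fun _ => (1:ℝ)) (fun _ _ => rfl) hsum1
  refine ⟨part1, ?_⟩
  simp only [mul_one] at h1
  have hposden : 0 < ∑' n : {n : Λ → ℤ // n o = 0},
      Real.exp (-(1 / 2) * quadForm ΔJ (dgField β n.1)) :=
    Summable.tsum_pos hZ (fun i => (Real.exp_pos _).le) ⟨fun _ => 0, rfl⟩ (Real.exp_pos _)
  have hdiv := hF.div h1 hposden.ne'
  refine Filter.Tendsto.congr' ?_ hdiv
  filter_upwards [self_mem_nhdsWithin] with m hm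
  have hm' : (0:ℝ) < m := hm
  have hπ := Real.pi_pos
  have hsqβ : 0 < Real.sqrt β := Real.sqrt_pos.2 hβ
  have hcard : 0 < Fintype.card Λ := Fintype.card_pos_iff.2 ⟨o⟩
  have hN : (0:ℝ) < (Fintype.card Λ : ℝ) := by exact_mod_cast hcard
  have ha : 0 < m * ((2 * Real.pi / Real.sqrt β)^2 * (Fintype.card Λ : ℝ)) / 2 := by positivity
  have hth : th (m * ((2 * Real.pi / Real.sqrt β)^2 * (Fintype.card Λ : ℝ)) / 2) 0 ≠ 0 :=
    (lt_of_lt_of_le one_pos (one_le_th0 ha)).ne'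
  simp only [Pi.div_apply]
  rw [div_div_div_comm, div_self hth, div_one]
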